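/- Let n ≥ 1, let Q be an n×n real matrix with nonnegative entries and zero diagonal, let x ∈ ℝⁿ, and suppose the feasible set F(x) is nonempty. Then F(x) has a least element z* with respect to the componentwise partial order (z* ∈ F(x) and z* ≤ z componentwise for all z ∈ F(x)), and this least element solves the jump system JS(x): z*_i = ( x_i − Σ_{j≠i} q_{ij} z*_j )_{-} for all 1 ≤ i ≤ n. -/
import Mathlib


open Matrix Finset Filter

/-- Negative part: `(a)₋ = max(0, −a)`. -/
noncomputable def nPart (a : ℝ) : ℝ := max 0 (-a)

/-- The jump system JS(x): `z i = (x i − ∑_{j ≠ i} Q i j * z j)₋` for all `i`. -/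
noncomputable def JS {n : ℕ} (Q : Matrix (Fin n) (Fin n) ℝ) (x z : Fin n → ℝ) : Prop :=
  ∀ i, z i = nPart (x i - ∑ j ∈ Finset.univ.erase i, Q i j * z j)

/-- The cone `C = {u : u ≥ 0 and uᵀ(I − Q) ≤ 0 componentwise}`. -/
def coneC {n : ℕ} (Q : Matrix (Fin n) (Fin n) ℝ) : Set (Fin n → ℝ) :=
  {u | (∀ i, 0 ≤ u i) ∧ ∀ j, Matrix.vecMul u (1 - Q) j ≤ 0}

/-- The dual cone `C* = {y : uᵀ y ≥ 0 for all u ∈ C}`. -/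
def dualConeC {n : ℕ} (Q : Matrix (Fin n) (Fin n) ℝ) : Set (Fin n → ℝ) :=
  {y | ∀ u ∈ coneC Q, 0 ≤ ∑ i, u i * y i}

/-- The feasible set `F(x) = {z : z ≥ 0 and (I − Q) z ≥ −x componentwise}`. -/
def feas {n : ℕ} (Q : Matrix (Fin n) (Fin n) ℝ) (x : Fin n → ℝ) : Set (Fin n → ℝ) :=
  {z | (∀ i, 0 ≤ z i) ∧ ∀ i, -(x i) ≤ Matrix.mulVec (1 - Q) z i}

lemma mulVec_one_sub_apply {n : ℕ} (Q : Matrix (Fin n) (Fin n) ℝ) (z : Fin n → ℝ) (i : Fin n) :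
    Matrix.mulVec (1 - Q) z i = z i - ∑ j, Q i j * z j := by
  rw [Matrix.sub_mulVec, Matrix.one_mulVec]
  simp [Matrix.mulVec, dotProduct]

/-- If `F(x)` is nonempty then it has a least element with respect to the componentwise
order, and this least element solves the jump system JS(x). -/
theorem feas_least_element_solves_js {n : ℕ} (hn : 1 ≤ n)
    (Q : Matrix (Fin n) (Fin n) ℝ)
    (hQnonneg : ∀ i j, 0 ≤ Q i j) (hQdiag : ∀ i, Q i i = 0)
    (x : Fin n → ℝ) (hne : (feas Q x).Nonempty) :
    ∃ zstar : Fin n → ℝ, zstar ∈ feas Q x ∧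
      (∀ z ∈ feas Q x, ∀ i, zstar i ≤ z i) ∧ JS Q x zstar := by
  classical
  set S : Fin n → Set ℝ := fun i => (fun z : Fin n → ℝ => z i) '' feas Q x with hS
  have hSne : ∀ i, (S i).Nonempty := fun i => hne.image _
  have hSbdd : ∀ i, BddBelow (S i) := by
    intro i
    exact ⟨0, by rintro a ⟨z, hz, rfl⟩; exact hz.1 i⟩
  set zstar : Fin n → ℝ := fun i => sInf (S i) with hzst
  have hlb : ∀ z ∈ feas Q x, ∀ i, zstar i ≤ z i := fun z hz i =>
    csInf_le (hSbdd i) ⟨z, hz, rfl⟩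
  have hz0 : ∀ i, 0 ≤ zstar i := fun i =>
    le_csInf (hSne i) (by rintro a ⟨z, hz, rfl⟩; exact hz.1 i)
  -- key feasibility inequality for zstar
  have key : ∀ i, -(x i) ≤ zstar i - ∑ j, Q i j * zstar j := by
    intro i
    have : -(x i) + ∑ j, Q i j * zstar j ≤ zstar i := by
      refine le_of_forall_pos_le_add ?_
      intro ε hε
      obtain ⟨a, ⟨z, hz, rfl⟩, ha⟩ := exists_lt_of_csInf_lt (hSne i)
        (lt_add_of_pos_right (zstar i) hε)
      have hzi := hz.2 i
      rw [mulVec_one_sub_apply] at hzi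
      have hsum : ∑ j, Q i j * zstar j ≤ ∑ j, Q i j * z j :=
        Finset.sum_le_sum fun j _ =>
          mul_le_mul_of_nonneg_left (hlb z hz j) (hQnonneg i j)
      have : -(x i) + ∑ j, Q i j * z j ≤ z i := by linarith
      linarith
    linarith
  have hfeas : zstar ∈ feas Q x := by
    refine ⟨hz0, fun i => ?_⟩
    rw [mulVec_one_sub_apply]
    exact key i
  -- sum over erase equals full sum since diagonal is zero
  have hsum_erase : ∀ (i : Fin n) (z : Fin n → ℝ),
      ∑ j ∈ Finset.univ.erase i, Q i j * z j = ∑ j, Q i j * z j := by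
    intro i z
    exact Finset.sum_erase _ (by rw [hQdiag i]; ring)
  refine ⟨zstar, hfeas, hlb, ?_⟩
  intro i
  set s := ∑ j ∈ Finset.univ.erase i, Q i j * zstar j with hs
  have hsfull : s = ∑ j, Q i j * zstar j := hsum_erase i zstar
  have hub : nPart (x i - s) ≤ zstar i := by
    have h1 : -(x i - s) ≤ zstar i := by rw [hsfull]; linarith [key i]
    exact max_le (hz0 i) h1
  set w : Fin n → ℝ := Function.update zstar i (nPart (x i - s)) with hw
  have hwi : w i = nPart (x i - s) := Function.update_self i _ zstar
  have hwj : ∀ j, j ≠ i → w j = zstar j := fun j hj => Function.update_of_ne hj _ zstar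
  have hwle : ∀ j, w j ≤ zstar j := by
    intro j
    by_cases h : j = i
    · subst h; rw [hwi]; exact hub
    · rw [hwj j h]
  have hw0 : ∀ j, 0 ≤ w j := by
    intro j
    by_cases h : j = i
    · subst h; rw [hwi]; exact le_max_left _ _
    · rw [hwj j h]; exact hz0 j
  have hwfeas : w ∈ feas Q x := by
    refine ⟨hw0, fun k => ?_⟩
    rw [mulVec_one_sub_apply]
    by_cases h : k = i
    · subst h
      have hswk : ∑ j, Q k j * w j = s := by
        rw [← hsum_erase k w, hs]
        exact Finset.sum_congr rfl fun j hj => by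
          rw [hwj j (Finset.ne_of_mem_erase hj)]
      rw [hswk, hwi]
      have : -(x k - s) ≤ nPart (x k - s) := le_max_right _ _
      linarith
    · have hsum : ∑ j, Q k j * w j ≤ ∑ j, Q k j * zstar j :=
        Finset.sum_le_sum fun j _ =>
          mul_le_mul_of_nonneg_left (hwle j) (hQnonneg k j)
      rw [hwj k h]
      linarith [key k]
  have := hlb w hwfeas i
  rw [hwi] at this
  exact le_antisymm this hub
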